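/- Let D ≥ 2, k ≥ 2 be integers and let M be the 4×4 matrix with rows (D,D,D,D), (0,1,1,0), (0,0,1,−1), (0,0,0,D^k). Then det M = D^{k+1}, the denominator D(Δ) = D, the largest invariant factor is D^k, and the lattice points in the fundamental domain of the column lattice are exactly the points (j_1/D^k)V_1 + {(D^k − j_4)/D^k}V_2 + (j_4/D^k)V_3 + (j_4/D^k)V_4 with 0 ≤ j_1, j_4 ≤ D^k − 1 and j_1 + j_4 ≡ 0 (mod D^{k−1}); there are exactly D^{k+1} such points. -/

import Mathlib

open Matrix


lemma mod_helper (n j1 j4 : ℕ) (hn : 0 < n) (h : n ∣ j1 + j4) :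
    (n - j4 % n) % n = j1 % n := by
  have hj1' : j1 % n < n := Nat.mod_lt _ hn
  have hj4' : j4 % n < n := Nat.mod_lt _ hn
  have h2 : (j1 % n + j4 % n) % n = 0 := by
    rw [← Nat.add_mod]
    exact Nat.mod_eq_zero_of_dvd h
  rcases Nat.eq_zero_or_pos (j4 % n) with hb | hb
  · rw [hb, Nat.add_zero] at h2
    rw [Nat.mod_eq_of_lt hj1'] at h2
    rw [hb, Nat.sub_zero, Nat.mod_self, h2]
  · have hlt : n - j4 % n < n := by omega
    rw [Nat.mod_eq_of_lt hlt]
    have hsum : j1 % n + j4 % n = n := by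
      rcases Nat.lt_or_ge (j1 % n + j4 % n) n with h' | h'
      · rw [Nat.mod_eq_of_lt h'] at h2; omega
      · have hlt2 : j1 % n + j4 % n - n < n := by omega
        rw [Nat.mod_eq_sub_mod h', Nat.mod_eq_of_lt hlt2] at h2; omega
    omega


private lemma aux_snf (D k : ℕ) (hD : 2 ≤ D) (hk : 2 ≤ k)
    (M : Matrix (Fin 4) (Fin 4) ℤ)
    (hM : M = !![(D : ℤ), D, D, D; 0, 1, 1, 0; 0, 0, 1, -1; 0, 0, 0, (D : ℤ) ^ k])
    (P Q : Matrix (Fin 4) (Fin 4) ℤ) (d : Fin 4 → ℤ)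
    (hP : IsUnit P.det) (hQ : IsUnit Q.det) (hPQ : P * M * Q = Matrix.diagonal d)
    (hdvd : ∀ i j : Fin 4, i ≤ j → d i ∣ d j) : (d 3).natAbs = D ^ k := by
  have hpow : (D : ℤ) ^ (k - 1) * D = (D : ℤ) ^ k := by
    rw [← pow_succ]; congr 1; omega
  set A : Matrix (Fin 4) (Fin 4) ℤ :=
    !![(D:ℤ)^(k-1), -(D:ℤ)^k, 0, -1; 0, (D:ℤ)^k, -(D:ℤ)^k, -1; 0, 0, (D:ℤ)^k, 1; 0, 0, 0, 1] with hA
  have hMA : M * A = ((D:ℤ)^k) • 1 := by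
    subst hM
    ext i j
    fin_cases i <;> fin_cases j <;>
      simp [Matrix.mul_apply, Fin.sum_univ_four, hA, Matrix.vecHead, Matrix.vecTail] <;>
      linarith [hpow]
  have hdetM : M.det = (D:ℤ)^(k+1) := by
    subst hM; simp [Matrix.det_succ_row_zero, Fin.sum_univ_succ]; ring
  have : Invertible P := P.invertibleOfIsUnitDet hP
  have : Invertible Q := Q.invertibleOfIsUnitDet hQ
  have key1 : Matrix.diagonal d * (⅟Q * (A * ⅟P)) = ((D:ℤ)^k) • 1 := by
    rw [← hPQ, mul_assoc (P*M) Q, mul_invOf_cancel_left, mul_assoc P M, ← mul_assoc M A,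
      hMA, smul_mul_assoc, one_mul, mul_smul_comm, mul_invOf_self]
  have hd3dvd : d 3 ∣ (D:ℤ)^k := by
    have h := congrFun (congrFun key1 3) 3
    rw [Matrix.diagonal_mul, Matrix.smul_apply, Matrix.one_apply_eq, smul_eq_mul, mul_one] at h
    exact ⟨_, h.symm⟩
  have hdet_diag : ∏ i, d i = P.det * M.det * Q.det := by
    rw [← Matrix.det_diagonal, ← hPQ, Matrix.det_mul, Matrix.det_mul]
  have hdne : ∀ i, d i ≠ 0 := by
    intro i hi
    have hz : ∏ i, d i ≠ 0 := by
      rw [hdet_diag, hdetM]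
      have h3 : (D:ℤ)^(k+1) ≠ 0 := by positivity
      exact mul_ne_zero (mul_ne_zero hP.ne_zero h3) hQ.ne_zero
    exact hz (Finset.prod_eq_zero (Finset.mem_univ i) hi)
  set c : Fin 4 → ℤ := fun i => d 3 / d i with hc
  have hcc : ∀ i, d i * c i = d 3 := by
    intro i
    exact Int.mul_ediv_cancel' (hdvd i 3 (by fin_cases i <;> decide))
  have hdiagdc : Matrix.diagonal d * Matrix.diagonal c = (d 3) • 1 := by
    rw [Matrix.diagonal_mul_diagonal]
    ext i j
    by_cases h : i = j <;> simp [Matrix.diagonal, h, hcc, Matrix.one_apply]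
  have hM' : M = ⅟P * (Matrix.diagonal d * ⅟Q) := by
    rw [← hPQ, mul_assoc (P*M) Q, mul_invOf_self, mul_one, invOf_mul_cancel_left]
  have key2 : M * (Q * Matrix.diagonal c * P) = (d 3) • 1 := by
    rw [Matrix.mul_assoc Q, hM', mul_assoc (⅟P), mul_assoc (Matrix.diagonal d) (⅟Q), invOf_mul_cancel_left,
      ← mul_assoc (Matrix.diagonal d), hdiagdc, smul_mul_assoc, one_mul, mul_smul_comm,
      invOf_mul_self]
  have key3 : M * (((D:ℤ)^k) • (Q * Matrix.diagonal c * P) - (d 3) • A) = 0 := by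
    rw [mul_sub, mul_smul_comm, key2, mul_smul_comm, hMA, smul_smul, smul_smul, mul_comm, sub_self]
  have hX : (((D:ℤ)^k) • (Q * Matrix.diagonal c * P) - (d 3) • A) = 0 := by
    have h2 := congrArg (fun Y => M.adjugate * Y) key3
    simp only [← Matrix.mul_assoc, Matrix.adjugate_mul, Matrix.smul_mul, Matrix.one_mul,
      Matrix.mul_zero] at h2
    have hdet0 : M.det ≠ 0 := by rw [hdetM]; positivity
    ext i j
    have h3 := congrFun (congrFun h2 i) j
    rw [Matrix.smul_apply, smul_eq_mul, Matrix.zero_apply] at h3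
    simpa using (mul_eq_zero.mp h3).resolve_left hdet0
  have hA33 : A 3 3 = 1 := by rw [hA]; rfl
  have hdvd2 : (D:ℤ)^k ∣ d 3 := by
    have h33 := congrFun (congrFun hX 3) 3
    rw [Matrix.sub_apply, Matrix.smul_apply, Matrix.smul_apply, hA33, smul_eq_mul, smul_eq_mul,
      mul_one, Matrix.zero_apply, sub_eq_zero] at h33
    exact ⟨(Q * Matrix.diagonal c * P) 3 3, h33.symm⟩
  have h1 := Int.natAbs_dvd_natAbs.mpr hd3dvd
  have h2 := Int.natAbs_dvd_natAbs.mpr hdvd2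
  rw [Nat.dvd_antisymm h1 h2]
  simp [Int.natAbs_pow]


private lemma aux_set (D k : ℕ) (hD : 2 ≤ D) (hk : 2 ≤ k)
    (S : Set (Fin 4 → ℚ))
    (hS : S = {r | (∀ i, 0 ≤ r i ∧ r i < 1) ∧ ∀ i, ∃ z : ℤ,
      ∑ j, ((!![(D : ℤ), D, D, D; 0, 1, 1, 0; 0, 0, 1, -1; 0, 0, 0, (D : ℤ) ^ k]) i j : ℚ) * r j = z}) :
    S = {r | ∃ j₁ j₄ : ℕ, j₁ ≤ D ^ k - 1 ∧ j₄ ≤ D ^ k - 1 ∧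
            D ^ (k - 1) ∣ (j₁ + j₄) ∧
            r = ![(j₁ : ℚ) / (D : ℚ) ^ k,
                  Int.fract (((D : ℚ) ^ k - (j₄ : ℚ)) / (D : ℚ) ^ k),
                  (j₄ : ℚ) / (D : ℚ) ^ k, (j₄ : ℚ) / (D : ℚ) ^ k]} := by
  subst hS
  have hD0 : (0:ℚ) < (D:ℚ) := by positivity
  have hDk0 : (0:ℚ) < (D:ℚ)^k := by positivity
  have hDkne : (D:ℚ)^k ≠ 0 := ne_of_gt hDk0
  have hkk : k - 1 + 1 = k := by omega
  have hE : (D:ℚ)^k = (D:ℚ)^(k-1) * D := by rw [← pow_succ, hkk]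
  have hEZ : (D:ℤ)^k = (D:ℤ)^(k-1) * D := by rw [← pow_succ, hkk]
  have hDk1 : 1 ≤ D ^ k := Nat.one_le_pow _ _ (by omega)
  ext r
  simp only [Set.mem_setOf_eq]
  constructor
  · rintro ⟨hb, hz⟩
    obtain ⟨z0, h0⟩ := hz 0
    obtain ⟨z1, h1⟩ := hz 1
    obtain ⟨z2, h2⟩ := hz 2
    obtain ⟨z3, h3⟩ := hz 3
    simp [Fin.sum_univ_four, Matrix.vecHead, Matrix.vecTail] at h0 h1 h2 h3
    push_cast at h0 h1 h2 h3
    have hb0 := hb 0; have hb1 := hb 1; have hb2 := hb 2; have hb3 := hb 3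
    have hz2 : z2 = 0 := by
      have l1 : (-1:ℚ) < (z2:ℚ) := by rw [← h2]; linarith [hb2.1, hb2.2, hb3.1, hb3.2]
      have l2 : (z2:ℚ) < 1 := by rw [← h2]; linarith [hb2.1, hb2.2, hb3.1, hb3.2]
      have l1' : (-1:ℤ) < z2 := by exact_mod_cast l1
      have l2' : z2 < 1 := by exact_mod_cast l2
      omega
    have hr23 : r 2 = r 3 := by rw [hz2] at h2; push_cast at h2; linarith
    have hz3nn : (0:ℤ) ≤ z3 := by
      have : (0:ℚ) ≤ (z3:ℚ) := by rw [← h3]; exact mul_nonneg hDk0.le hb3.1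
      exact_mod_cast this
    have hz3lt : z3 < (D:ℤ)^k := by
      have : (z3:ℚ) < (D:ℚ)^k := by rw [← h3]; nlinarith [hb3.2, hDk0]
      exact_mod_cast this
    have hr3 : r 3 = (z3:ℚ) / (D:ℚ)^k := by
      rw [← h3, mul_div_cancel_left₀ _ hDkne]
    set j1 : ℤ := (D:ℤ)^(k-1) * z0 - (D:ℤ)^k * z1 - z3 with hj1def
    have hj1q : ((j1:ℤ):ℚ) = (D:ℚ)^k * r 0 := by
      push_cast [hj1def]
      rw [hE] at h3 ⊢
      linear_combination (-(D:ℚ)^(k-1)) * h0 + ((D:ℚ)^(k-1) * (D:ℚ)) * h1 + h3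
    have hj1nn : (0:ℤ) ≤ j1 := by
      have : (0:ℚ) ≤ ((j1:ℤ):ℚ) := by rw [hj1q]; exact mul_nonneg hDk0.le (hb0).1
      exact_mod_cast this
    have hj1lt : j1 < (D:ℤ)^k := by
      have : ((j1:ℤ):ℚ) < (D:ℚ)^k := by rw [hj1q]; nlinarith [hb0.2, hDk0]
      exact_mod_cast this
    have hcast1 : ((j1.toNat:ℕ):ℚ) = ((j1:ℤ):ℚ) := by
      rw [← Int.cast_natCast, Int.toNat_of_nonneg hj1nn]
    have hcast3 : ((z3.toNat:ℕ):ℚ) = ((z3:ℤ):ℚ) := by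
      rw [← Int.cast_natCast, Int.toNat_of_nonneg hz3nn]
    refine ⟨j1.toNat, z3.toNat, ?_, ?_, ?_, ?_⟩
    · have : ((j1.toNat:ℕ):ℤ) < ((D^k:ℕ):ℤ) := by
        push_cast
        rwa [Int.toNat_of_nonneg hj1nn]
      have := Int.ofNat_lt.mp this
      omega
    · have : ((z3.toNat:ℕ):ℤ) < ((D^k:ℕ):ℤ) := by
        push_cast
        rwa [Int.toNat_of_nonneg hz3nn]
      have := Int.ofNat_lt.mp this
      omega
    · have : ((D^(k-1):ℕ):ℤ) ∣ ((j1.toNat + z3.toNat : ℕ):ℤ) := by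
        push_cast [Int.toNat_of_nonneg hj1nn, Int.toNat_of_nonneg hz3nn]
        refine ⟨z0 - D*z1, ?_⟩
        rw [hj1def, hEZ]; ring
      exact_mod_cast this
    · funext i
      fin_cases i
      · show r 0 = _
        simp only [Matrix.cons_val_zero]
        rw [hcast1, hj1q, mul_div_cancel_left₀ _ hDkne]
        rfl
      · show r 1 = _
        simp only [Matrix.cons_val_one, Matrix.head_cons]
        have key : ((D:ℚ)^k - ((z3.toNat:ℕ):ℚ))/(D:ℚ)^k = r 1 + ((1 - z1 : ℤ):ℚ) := by
          rw [hcast3, sub_div, div_self hDkne, ← h3, mul_div_cancel_left₀ _ hDkne]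
          push_cast
          linarith [h1, hr23]
        rw [key, Int.fract_add_intCast, Int.fract_eq_self.mpr ⟨hb1.1, hb1.2⟩]
        rfl
      · show r 2 = _
        simp only [Matrix.cons_val_two, Matrix.tail_cons, Matrix.head_cons]
        rw [hcast3, hr23, hr3]
        rfl
      · show r 3 = _
        simp only [Matrix.cons_val_three, Matrix.tail_cons, Matrix.head_cons]
        rw [hcast3, hr3]
        rfl
  · rintro ⟨j1, j4, hj1, hj4, ⟨m, hm⟩, rfl⟩
    have hj1lt : j1 < D^k := by omega
    have hj4lt : j4 < D^k := by omega
    have hj1q : ((j1:ℕ):ℚ) < (D:ℚ)^k := by exact_mod_cast hj1lt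
    have hj4q : ((j4:ℕ):ℚ) < (D:ℚ)^k := by exact_mod_cast hj4lt
    set b : ℤ := ⌊((D:ℚ)^k - (j4:ℚ))/(D:ℚ)^k⌋ with hb
    have hfr : Int.fract (((D:ℚ)^k - (j4:ℚ))/(D:ℚ)^k)
        = ((D:ℚ)^k - (j4:ℚ))/(D:ℚ)^k - (b:ℚ) := (Int.self_sub_floor _).symm
    constructor
    · intro i
      fin_cases i
      · show (0:ℚ) ≤ (j1:ℚ)/(D:ℚ)^k ∧ (j1:ℚ)/(D:ℚ)^k < 1
        exact ⟨by positivity, by rw [div_lt_one hDk0]; exact hj1q⟩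
      · show (0:ℚ) ≤ Int.fract (((D:ℚ)^k - (j4:ℚ))/(D:ℚ)^k) ∧ _
        exact ⟨Int.fract_nonneg _, Int.fract_lt_one _⟩
      · show (0:ℚ) ≤ (j4:ℚ)/(D:ℚ)^k ∧ (j4:ℚ)/(D:ℚ)^k < 1
        exact ⟨by positivity, by rw [div_lt_one hDk0]; exact hj4q⟩
      · show (0:ℚ) ≤ (j4:ℚ)/(D:ℚ)^k ∧ (j4:ℚ)/(D:ℚ)^k < 1
        exact ⟨by positivity, by rw [div_lt_one hDk0]; exact hj4q⟩
    · intro i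
      fin_cases i
      · refine ⟨(m:ℤ) + D - D * b, ?_⟩
        simp [Fin.sum_univ_four, Matrix.vecHead, Matrix.vecTail]
        push_cast
        rw [hfr]
        have hmq : ((j1:ℕ):ℚ) + ((j4:ℕ):ℚ) = (D:ℚ)^(k-1) * (m:ℚ) := by exact_mod_cast hm
        field_simp
        rw [hE]
        linear_combination (D:ℚ) * hmq
      · refine ⟨1 - b, ?_⟩
        simp [Fin.sum_univ_four, Matrix.vecHead, Matrix.vecTail]
        push_cast
        rw [hfr]
        field_simp
        ring
      · refine ⟨0, ?_⟩
        simp [Fin.sum_univ_four, Matrix.vecHead, Matrix.vecTail]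
      · refine ⟨(j4:ℤ), ?_⟩
        simp [Fin.sum_univ_four, Matrix.vecHead, Matrix.vecTail]
        push_cast
        field_simp


private lemma aux_card (D k : ℕ) (hD : 2 ≤ D) (hk : 2 ≤ k) :
    Nat.card {r : Fin 4 → ℚ | ∃ j₁ j₄ : ℕ, j₁ ≤ D ^ k - 1 ∧ j₄ ≤ D ^ k - 1 ∧
            D ^ (k - 1) ∣ (j₁ + j₄) ∧
            r = ![(j₁ : ℚ) / (D : ℚ) ^ k,
                  Int.fract (((D : ℚ) ^ k - (j₄ : ℚ)) / (D : ℚ) ^ k),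
                  (j₄ : ℚ) / (D : ℚ) ^ k, (j₄ : ℚ) / (D : ℚ) ^ k]} = D^(k+1) := by
  set n := D ^ (k - 1) with hn
  have hn0 : 0 < n := Nat.pow_pos (by omega)
  have hNn : D ^ k = n * D := by rw [hn, ← pow_succ]; congr 1; omega
  have hDk1 : 1 ≤ D ^ k := Nat.one_le_pow _ _ (by omega)
  have hDkne : (D:ℚ)^k ≠ 0 := by positivity
  set ψ : ℕ × ℕ → (Fin 4 → ℚ) := fun p =>
    ![(p.1 : ℚ) / (D : ℚ) ^ k,
      Int.fract (((D : ℚ) ^ k - (p.2 : ℚ)) / (D : ℚ) ^ k),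
      (p.2 : ℚ) / (D : ℚ) ^ k, (p.2 : ℚ) / (D : ℚ) ^ k] with hψ
  set T : Finset (ℕ × ℕ) :=
    (Finset.range (D^k) ×ˢ Finset.range (D^k)).filter (fun p => n ∣ p.1 + p.2) with hT
  have hset : {r : Fin 4 → ℚ | ∃ j₁ j₄ : ℕ, j₁ ≤ D ^ k - 1 ∧ j₄ ≤ D ^ k - 1 ∧
            D ^ (k - 1) ∣ (j₁ + j₄) ∧
            r = ![(j₁ : ℚ) / (D : ℚ) ^ k,
                  Int.fract (((D : ℚ) ^ k - (j₄ : ℚ)) / (D : ℚ) ^ k),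
                  (j₄ : ℚ) / (D : ℚ) ^ k, (j₄ : ℚ) / (D : ℚ) ^ k]}
      = ↑(T.image ψ) := by
    ext r
    simp only [Set.mem_setOf_eq, Finset.coe_image, Set.mem_image, Finset.mem_coe,
      Finset.mem_filter, Finset.mem_product, Finset.mem_range, hT, hψ]
    constructor
    · rintro ⟨j1, j4, h1, h4, hd, rfl⟩
      exact ⟨(j1, j4), ⟨⟨by omega, by omega⟩, hd⟩, rfl⟩
    · rintro ⟨⟨j1, j4⟩, ⟨⟨h1, h4⟩, hd⟩, rfl⟩
      exact ⟨j1, j4, by omega, by omega, hd, rfl⟩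
  rw [hset, Nat.card_coe_set_eq, Set.ncard_coe_finset]
  have hinj : Set.InjOn ψ T := by
    intro p _ q _ hpq
    have e0 := congrFun hpq 0
    have e2 := congrFun hpq 2
    simp only [hψ, Matrix.cons_val_zero, Matrix.cons_val_two, Matrix.tail_cons,
      Matrix.head_cons] at e0 e2
    have p1 : (p.1 : ℚ) = q.1 := by
      field_simp at e0; exact_mod_cast e0
    have p2 : (p.2 : ℚ) = q.2 := by
      field_simp at e2; exact_mod_cast e2
    have : p.1 = q.1 := by exact_mod_cast p1
    have : p.2 = q.2 := by exact_mod_cast p2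
    exact Prod.ext ‹p.1 = q.1› ‹p.2 = q.2›
  rw [Finset.card_image_of_injOn hinj]
  have hcard : T.card = (Finset.range D ×ˢ (Finset.range D ×ˢ Finset.range n)).card := by
    apply Finset.card_bij' (fun p _ => (p.2 / n, p.1 / n, p.2 % n))
      (fun q _ => (n * q.2.1 + (n - q.2.2) % n, n * q.1 + q.2.2))
    · rintro ⟨j1, j4⟩ hp
      simp only [hT, Finset.mem_filter, Finset.mem_product, Finset.mem_range] at hp ⊢
      obtain ⟨⟨h1, h4⟩, hd⟩ := hp
      have hcomm : D * n = D ^ k := by rw [hNn]; ring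
      refine ⟨?_, ?_, Nat.mod_lt _ hn0⟩
      · rw [Nat.div_lt_iff_lt_mul hn0]; omega
      · rw [Nat.div_lt_iff_lt_mul hn0]; omega
    · rintro ⟨a, a', b⟩ hq
      simp only [hT, Finset.mem_filter, Finset.mem_product, Finset.mem_range] at hq ⊢
      obtain ⟨ha, ha', hb⟩ := hq
      have hmod : (n - b) % n < n := Nat.mod_lt _ hn0
      refine ⟨⟨?_, ?_⟩, ?_⟩
      · calc n * a' + (n - b) % n < n * a' + n := by omega
          _ = n * (a' + 1) := by ring
          _ ≤ n * D := Nat.mul_le_mul_left _ (by omega)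
          _ = D ^ k := hNn.symm
      · calc n * a + b < n * a + n := by omega
          _ = n * (a + 1) := by ring
          _ ≤ n * D := Nat.mul_le_mul_left _ (by omega)
          _ = D ^ k := hNn.symm
      · have key : n ∣ (n - b) % n + b := by
          rcases Nat.eq_zero_or_pos b with hb0 | hb0
          · subst hb0; simp
          · rw [Nat.mod_eq_of_lt (by omega)]
            have : n - b + b = n := by omega
            rw [this]
        have : n * a' + (n - b) % n + (n * a + b)
            = (n * a' + n * a) + ((n - b) % n + b) := by ring
        rw [this]
        exact Nat.dvd_add ⟨a' + a, by ring⟩ key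
    · rintro ⟨j1, j4⟩ hp
      simp only [hT, Finset.mem_filter, Finset.mem_product, Finset.mem_range] at hp
      obtain ⟨⟨h1, h4⟩, hd⟩ := hp
      have := mod_helper n j1 j4 hn0 hd
      simp only [Prod.mk.injEq]
      constructor
      · rw [this, Nat.div_add_mod]
      · rw [Nat.div_add_mod]
    · rintro ⟨a, a', b⟩ hq
      simp only [hT, Finset.mem_filter, Finset.mem_product, Finset.mem_range] at hq
      obtain ⟨ha, ha', hb⟩ := hq
      have hmod : (n - b) % n < n := Nat.mod_lt _ hn0
      simp only [Prod.mk.injEq]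
      refine ⟨?_, ?_, ?_⟩
      · rw [Nat.mul_add_div hn0, Nat.div_eq_of_lt hb, Nat.add_zero]
      · rw [Nat.mul_add_div hn0, Nat.div_eq_of_lt hmod, Nat.add_zero]
      · rw [Nat.mul_add_mod, Nat.mod_eq_of_lt hb]
  rw [hcard]
  simp only [Finset.card_product, Finset.card_range]
  rw [show k + 1 = 1 + 1 + (k - 1) by omega, pow_add, pow_add, pow_one]
  ring


/-- For `D ≥ 2`, `k ≥ 2` and the 4×4 matrix `M` with rows `(D,D,D,D)`, `(0,1,1,0)`,
`(0,0,1,−1)`, `(0,0,0,D^k)`: `det M = D^(k+1)`, the denominator `D(Δ)` equals `D`, the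
largest invariant factor is `D^k`, and the lattice points of the fundamental domain
correspond exactly to the barycentric coefficient vectors
`(j₁/D^k, {(D^k − j₄)/D^k}, j₄/D^k, j₄/D^k)` with `0 ≤ j₁, j₄ ≤ D^k − 1` and
`j₁ + j₄ ≡ 0 (mod D^(k−1))`; there are exactly `D^(k+1)` of them. -/
theorem four_dim_counterexample_structure (D k : ℕ) (hD : 2 ≤ D) (hk : 2 ≤ k)
    (M : Matrix (Fin 4) (Fin 4) ℤ)
    (hM : M = !![(D : ℤ), D, D, D; 0, 1, 1, 0; 0, 0, 1, -1; 0, 0, 0, (D : ℤ) ^ k])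
    (e : Fin 4 → ℚ) (he : ∀ j, ∑ i, e i * (M i j : ℚ) = 1)
    (S : Set (Fin 4 → ℚ))
    (hS : S = {r | (∀ i, 0 ≤ r i ∧ r i < 1) ∧ ∀ i, ∃ z : ℤ, ∑ j, (M i j : ℚ) * r j = z}) :
    M.det = (D : ℤ) ^ (k + 1) ∧
      (Finset.univ.lcm fun i => (e i).den) = D ∧
      (∀ (P Q : Matrix (Fin 4) (Fin 4) ℤ) (d : Fin 4 → ℤ),
        IsUnit P.det → IsUnit Q.det → P * M * Q = Matrix.diagonal d →
          (∀ i j : Fin 4, i ≤ j → d i ∣ d j) → (d 3).natAbs = D ^ k) ∧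
      S = {r | ∃ j₁ j₄ : ℕ, j₁ ≤ D ^ k - 1 ∧ j₄ ≤ D ^ k - 1 ∧
            D ^ (k - 1) ∣ (j₁ + j₄) ∧
            r = ![(j₁ : ℚ) / (D : ℚ) ^ k,
                  Int.fract (((D : ℚ) ^ k - (j₄ : ℚ)) / (D : ℚ) ^ k),
                  (j₄ : ℚ) / (D : ℚ) ^ k, (j₄ : ℚ) / (D : ℚ) ^ k]} ∧
      Nat.card S = D ^ (k + 1) := by
  have hSet := aux_set D k hD hk S (by rw [hS, hM])
  refine ⟨?_, ?_, fun P Q d hP hQ hPQ hdvd => aux_snf D k hD hk M hM P Q d hP hQ hPQ hdvd,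
    hSet, ?_⟩
  · subst hM; simp [Matrix.det_succ_row_zero, Fin.sum_univ_succ]; ring
  · -- denominators
    subst hM
    have hD0 : (D : ℚ) ≠ 0 := by positivity
    have hDk0 : (D : ℚ)^k ≠ 0 := by positivity
    have h0 := he 0
    have h1 := he 1
    have h2 := he 2
    have h3 := he 3
    simp [Fin.sum_univ_four, Matrix.vecHead, Matrix.vecTail] at h0 h1 h2 h3
    have e0 : e 0 = (D : ℚ)⁻¹ := by field_simp at h0 ⊢; linarith
    have e1 : e 1 = 0 := by rw [e0] at h1; field_simp at h1; linarith
    have e2 : e 2 = 0 := by rw [e0, e1] at h2; field_simp at h2; linarith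
    have e3 : e 3 = 0 := by
      rw [e0, e2] at h3
      have : e 3 * (D:ℚ)^k = 0 := by field_simp at h3; linarith
      exact (mul_eq_zero.mp this).resolve_right hDk0
    have hden : ((D:ℚ)⁻¹).den = D := Rat.inv_natCast_den_of_pos (by omega)
    rw [show (Finset.univ : Finset (Fin 4)) = {0,1,2,3} from by decide]
    simp [Finset.lcm_insert, e0, e1, e2, e3, hden]
  · rw [hSet]
    exact aux_card D k hD hk
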